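/- arXiv:2507.03709 — 6 statements merged into one kernel-verified Lean document; each statement's English description precedes it below -/
import Mathlib

section
/- Let (S, +) be a commutative semigroup, (S, ×) a semigroup, and σ, τ ∈ Sym(S) such that (S, +, ×^σ) and (S, +, ×^τ) are semirings. Then (S, +, ×^σ) and (S, +, ×^τ) are isomorphic as semirings if and only if σ and τ lie in the same double coset of Aut(S, ×) \ Sym(S) / Aut(S, +), i.e. τ = ασβ for some α ∈ Aut(S, ×) and β ∈ Aut(S, +). -/
/-- The operation `·^σ`: `x ·^σ y = ((x σ⁻¹) · (y σ⁻¹)) σ`. -/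
def opConj {S : Type*} (σ : Equiv.Perm S) (f : S → S → S) : S → S → S :=
  fun x y => σ (f (σ.symm x) (σ.symm y))

/-- `(S, add, mul)` is a semiring: `add` is an associative commutative
operation, `mul` is associative, and `mul` distributes over `add` on both
sides. No additive identity is required. -/
def IsSemiringOps {S : Type*} (add mul : S → S → S) : Prop :=
  (∀ x y z, add (add x y) z = add x (add y z)) ∧
  (∀ x y, add x y = add y x) ∧
  (∀ x y z, mul (mul x y) z = mul x (mul y z)) ∧
  (∀ x y z, mul x (add y z) = add (mul x y) (mul x z)) ∧
  (∀ x y z, mul (add y z) x = add (mul y x) (mul z x))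

/-- The semirings `(S, add₁, mul₁)` and `(S, add₂, mul₂)` are isomorphic via a
single bijection preserving both operations. -/
def SemiringIso {S : Type*} (add₁ mul₁ add₂ mul₂ : S → S → S) : Prop :=
  ∃ φ : Equiv.Perm S, (∀ x y, φ (add₁ x y) = add₂ (φ x) (φ y)) ∧
    (∀ x y, φ (mul₁ x y) = mul₂ (φ x) (φ y))

/-- The semirings `(S, add₁, mul₁)` and `(S, add₂, mul₂)` are anti-isomorphic:
a bijection preserving addition and reversing multiplication. -/
def SemiringAntiIso {S : Type*} (add₁ mul₁ add₂ mul₂ : S → S → S) : Prop :=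
  ∃ φ : Equiv.Perm S, (∀ x y, φ (add₁ x y) = add₂ (φ x) (φ y)) ∧
    (∀ x y, φ (mul₁ x y) = mul₂ (φ y) (φ x))

/-- Theorem 3 of the paper: `(S, +, ×^σ)` and `(S, +, ×^τ)` are isomorphic iff
`σ` and `τ` lie in the same double coset `Aut(S, ×) \ Sym(S) / Aut(S, +)`,
i.e. `τ = ασβ` ("first `α`, then `σ`, then `β`", so `β * σ * α` in Mathlib's
convention) for some automorphism `α` of `(S, ×)` and `β` of `(S, +)`. -/
theorem semiring_iso_iff_double_coset {S : Type*} (add mul : S → S → S)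
    (haddassoc : ∀ x y z, add (add x y) z = add x (add y z))
    (haddcomm : ∀ x y, add x y = add y x)
    (hmulassoc : ∀ x y z, mul (mul x y) z = mul x (mul y z))
    (σ τ : Equiv.Perm S)
    (h1 : IsSemiringOps add (opConj σ mul))
    (h2 : IsSemiringOps add (opConj τ mul)) :
    SemiringIso add (opConj σ mul) add (opConj τ mul) ↔
      ∃ α β : Equiv.Perm S,
        (∀ x y, α (mul x y) = mul (α x) (α y)) ∧
        (∀ x y, β (add x y) = add (β x) (β y)) ∧
        τ = β * σ * α := by
  constructor
  · rintro ⟨φ, hadd, hmul⟩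
    refine ⟨σ⁻¹ * φ⁻¹ * τ, φ, ?_, hadd, ?_⟩
    · have key : ∀ a b, τ.symm (φ (σ (mul a b))) =
          mul (τ.symm (φ (σ a))) (τ.symm (φ (σ b))) := by
        intro a b
        have h := hmul (σ a) (σ b)
        simp only [opConj, Equiv.symm_apply_apply] at h
        rw [h, Equiv.symm_apply_apply]
      intro x y
      have h := key (σ.symm (φ.symm (τ x))) (σ.symm (φ.symm (τ y)))
      simp only [Equiv.apply_symm_apply, Equiv.symm_apply_apply] at h
      simp only [Equiv.Perm.mul_apply, Equiv.Perm.inv_def]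
      rw [← h]
      simp
    · ext x
      simp [Equiv.Perm.mul_apply]
  · rintro ⟨α, β, hα, hβ, rfl⟩
    refine ⟨β, hβ, ?_⟩
    intro x y
    have hsymm : ∀ z : S, (β * σ * α).symm z = α.symm (σ.symm (β.symm z)) := by
      intro z
      rfl
    simp only [opConj, Equiv.Perm.mul_apply, hsymm, Equiv.symm_apply_apply]
    have := hα (α.symm (σ.symm x)) (α.symm (σ.symm y))
    simp only [Equiv.apply_symm_apply] at this
    rw [← this]
end

section
/- Let (S, +) be a commutative semigroup, (S, ×) a semigroup, and σ, τ ∈ Sym(S) such that (S, +, ×^σ) and (S, +, ×^τ) are semirings. If τ = ασβ with α an automorphism of (S, ×) and β an automorphism of (S, +), then β is a semiring isomorphism from (S, +, ×^σ) to (S, +, ×^τ). -/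
/-- If `τ = ασβ` (maps composed left to right, so `β * σ * α` in Mathlib's
convention) with `α ∈ Aut(S, ×)` and `β ∈ Aut(S, +)`, then `β` is a semiring
isomorphism from `(S, +, ×^σ)` to `(S, +, ×^τ)`. -/
theorem double_coset_gives_iso {S : Type*} (add mul : S → S → S)
    (haddassoc : ∀ x y z, add (add x y) z = add x (add y z))
    (haddcomm : ∀ x y, add x y = add y x)
    (hmulassoc : ∀ x y z, mul (mul x y) z = mul x (mul y z))
    (σ τ α β : Equiv.Perm S)
    (h1 : IsSemiringOps add (opConj σ mul))
    (h2 : IsSemiringOps add (opConj τ mul))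
    (hα : ∀ x y, α (mul x y) = mul (α x) (α y))
    (hβ : ∀ x y, β (add x y) = add (β x) (β y))
    (hτ : τ = β * σ * α) :
    (∀ x y, β (add x y) = add (β x) (β y)) ∧
    (∀ x y, β (opConj σ mul x y) = opConj τ mul (β x) (β y)) := by
  refine ⟨hβ, fun x y => ?_⟩
  subst hτ
  have hsymm : ∀ z, (β * σ * α).symm z = α.symm (σ.symm (β.symm z)) := fun z => rfl
  have happ : ∀ z, (β * σ * α) z = β (σ (α z)) := fun z => rfl
  have hα' : ∀ u v, α (mul (α.symm u) (α.symm v)) = mul u v := by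
    intro u v; rw [hα]; simp
  simp only [opConj, hsymm, happ, Equiv.symm_apply_apply, hα']
end

section
/- Let (S, +) be a commutative semigroup, (S, ×) a semigroup, and σ, τ ∈ Sym(S) such that (S, +, ×^σ) and (S, +, ×^τ) are semirings. Then (S, +, ×^σ) and (S, +, ×^τ) are isomorphic or anti-isomorphic as semirings if and only if σ and τ lie in the same double coset of Aut*(S, ×) \ Sym(S) / Aut(S, +), where Aut*(S, ×) is the group of automorphisms and anti-automorphisms of (S, ×). -/
/-- `φ` is an automorphism of the semigroup `(S, mul)`. -/
def IsAut {S : Type*} (mul : S → S → S) (φ : Equiv.Perm S) : Prop :=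
  ∀ x y, φ (mul x y) = mul (φ x) (φ y)

/-- `φ` is an anti-automorphism of the semigroup `(S, mul)`. -/
def IsAntiAut {S : Type*} (mul : S → S → S) (φ : Equiv.Perm S) : Prop :=
  ∀ x y, φ (mul x y) = mul (φ y) (φ x)

lemma aux_inv_aut {S : Type*} (mul : S → S → S) (φ : Equiv.Perm S)
    (h : IsAut mul φ) : IsAut mul φ⁻¹ := by
  intro x y
  apply φ.injective
  rw [h]
  simp [Equiv.Perm.inv_def]

lemma aux_inv_antiAut {S : Type*} (mul : S → S → S) (φ : Equiv.Perm S)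
    (h : IsAntiAut mul φ) : IsAntiAut mul φ⁻¹ := by
  intro x y
  apply φ.injective
  rw [h]
  simp [Equiv.Perm.inv_def]

/-- Corollary 4 of the paper: `(S, +, ×^σ)` and `(S, +, ×^τ)` are isomorphic
or anti-isomorphic iff `σ` and `τ` lie in the same double coset
`Aut*(S, ×) \ Sym(S) / Aut(S, +)`, i.e. `τ = ασβ` ("first `α`, then `σ`,
then `β`", so `β * σ * α` in Mathlib's convention) for some
`α ∈ Aut*(S, ×)` and `β ∈ Aut(S, +)`. -/
theorem semiring_iso_or_antiIso_iff_double_coset {S : Type*}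
    (add mul : S → S → S)
    (haddassoc : ∀ x y z, add (add x y) z = add x (add y z))
    (haddcomm : ∀ x y, add x y = add y x)
    (hmulassoc : ∀ x y z, mul (mul x y) z = mul x (mul y z))
    (σ τ : Equiv.Perm S)
    (h1 : IsSemiringOps add (opConj σ mul))
    (h2 : IsSemiringOps add (opConj τ mul)) :
    (SemiringIso add (opConj σ mul) add (opConj τ mul) ∨
     SemiringAntiIso add (opConj σ mul) add (opConj τ mul)) ↔
      ∃ α β : Equiv.Perm S,
        (IsAut mul α ∨ IsAntiAut mul α) ∧ IsAut add β ∧ τ = β * σ * α := by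
  constructor
  · rintro (⟨φ, hadd, hmul⟩ | ⟨φ, hadd, hmul⟩)
    · refine ⟨(τ⁻¹ * φ * σ)⁻¹, φ, Or.inl (aux_inv_aut mul _ ?_), hadd, by group⟩
      intro a b
      have h := hmul (σ a) (σ b)
      simp only [opConj, Equiv.symm_apply_apply] at h
      simp only [Equiv.Perm.mul_apply, Equiv.Perm.inv_def, h, Equiv.symm_apply_apply]
    · refine ⟨(τ⁻¹ * φ * σ)⁻¹, φ, Or.inr (aux_inv_antiAut mul _ ?_), hadd, by group⟩
      intro a b
      have h := hmul (σ a) (σ b)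
      simp only [opConj, Equiv.symm_apply_apply] at h
      simp only [Equiv.Perm.mul_apply, Equiv.Perm.inv_def, h, Equiv.symm_apply_apply]
  · rintro ⟨α, β, hα | hα, hβ, rfl⟩
    · left
      refine ⟨β, hβ, ?_⟩
      intro x y
      have h := aux_inv_aut mul α hα
      simp only [opConj, Equiv.Perm.coe_mul, Function.comp_apply, Equiv.symm_apply_apply,
        Equiv.Perm.inv_def] at h ⊢
      rw [show ((β * σ * α).symm : S → S) = (α.symm ∘ σ.symm ∘ β.symm : S → S) by
        rw [← Equiv.Perm.inv_def]; simp [mul_inv_rev]]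
      simp only [Function.comp_apply, Equiv.symm_apply_apply]
      rw [← h]
      simp
    · right
      refine ⟨β, hβ, ?_⟩
      intro x y
      have h := aux_inv_antiAut mul α hα
      simp only [opConj, Equiv.Perm.coe_mul, Function.comp_apply, Equiv.symm_apply_apply,
        Equiv.Perm.inv_def] at h ⊢
      rw [show ((β * σ * α).symm : S → S) = (α.symm ∘ σ.symm ∘ β.symm : S → S) by
        rw [← Equiv.Perm.inv_def]; simp [mul_inv_rev]]
      simp only [Function.comp_apply, Equiv.symm_apply_apply]
      rw [← h]
      simp
end

section
/- Up to isomorphism, there are exactly 10 semirings with 2 elements, where a semiring is a set with a commutative semigroup addition and a semigroup multiplication that distributes over addition on both sides (no additive identity required). -/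
/-- There are exactly 10 semirings with 2 elements up to isomorphism:
there is a set of 10 pairwise non-isomorphic semiring structures on `Fin 2`
such that every semiring structure on `Fin 2` is isomorphic to one of them. -/
theorem card_semirings_two : ∃ reps :
    Finset ((Fin 2 → Fin 2 → Fin 2) × (Fin 2 → Fin 2 → Fin 2)),
    reps.card = 10 ∧
    (∀ p ∈ reps, IsSemiringOps p.1 p.2) ∧
    (∀ p ∈ reps, ∀ q ∈ reps, p ≠ q → ¬ SemiringIso p.1 p.2 q.1 q.2) ∧
    (∀ add mul : Fin 2 → Fin 2 → Fin 2, IsSemiringOps add mul →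
      ∃ p ∈ reps, SemiringIso add mul p.1 p.2) := by
  refine ⟨{
    (![![0,0],![0,0]], ![![0,0],![0,0]]),
    (![![0,0],![0,0]], ![![0,0],![0,1]]),
    (![![0,0],![0,1]], ![![0,0],![0,0]]),
    (![![0,0],![0,1]], ![![0,0],![0,1]]),
    (![![0,0],![0,1]], ![![0,0],![1,1]]),
    (![![0,0],![0,1]], ![![0,1],![0,1]]),
    (![![0,0],![0,1]], ![![0,1],![1,1]]),
    (![![0,0],![0,1]], ![![1,1],![1,1]]),
    (![![0,1],![1,0]], ![![0,0],![0,0]]),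
    (![![0,1],![1,0]], ![![0,0],![0,1]])}, ?_, ?_, ?_, ?_⟩
  · decide
  · simp only [IsSemiringOps]; decide
  · simp only [SemiringIso]; decide
  · simp only [IsSemiringOps, SemiringIso]; decide
end

section
/- Up to isomorphism or anti-isomorphism, there are exactly 9 semirings with 2 elements. -/
set_option maxRecDepth 10000


instance {S : Type*} [Fintype S] [DecidableEq S] (add mul : S → S → S) :
    Decidable (IsSemiringOps add mul) := by unfold IsSemiringOps; infer_instance

instance {S : Type*} [Fintype S] [DecidableEq S] (a₁ m₁ a₂ m₂ : S → S → S) :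
    Decidable (SemiringIso a₁ m₁ a₂ m₂) := by unfold SemiringIso; infer_instance

instance {S : Type*} [Fintype S] [DecidableEq S] (a₁ m₁ a₂ m₂ : S → S → S) :
    Decidable (SemiringAntiIso a₁ m₁ a₂ m₂) := by unfold SemiringAntiIso; infer_instance

/-- There are exactly 9 semirings with 2 elements up to isomorphism or
anti-isomorphism. -/
theorem card_semirings_two_up_to_anti : ∃ reps :
    Finset ((Fin 2 → Fin 2 → Fin 2) × (Fin 2 → Fin 2 → Fin 2)),
    reps.card = 9 ∧
    (∀ p ∈ reps, IsSemiringOps p.1 p.2) ∧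
    (∀ p ∈ reps, ∀ q ∈ reps, p ≠ q →
      ¬ (SemiringIso p.1 p.2 q.1 q.2 ∨ SemiringAntiIso p.1 p.2 q.1 q.2)) ∧
    (∀ add mul : Fin 2 → Fin 2 → Fin 2, IsSemiringOps add mul →
      ∃ p ∈ reps, SemiringIso add mul p.1 p.2 ∨ SemiringAntiIso add mul p.1 p.2) := by
  refine ⟨{((fun x y => ![![(0:Fin 2),0],![0,0]] x y), (fun x y => ![![(0:Fin 2),0],![0,0]] x y)),
   ((fun x y => ![![(0:Fin 2),0],![0,0]] x y), (fun x y => ![![(0:Fin 2),0],![0,1]] x y)),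
   ((fun x y => ![![(0:Fin 2),0],![0,1]] x y), (fun x y => ![![(0:Fin 2),0],![0,0]] x y)),
   ((fun x y => ![![(0:Fin 2),0],![0,1]] x y), (fun x y => ![![(0:Fin 2),0],![0,1]] x y)),
   ((fun x y => ![![(0:Fin 2),0],![0,1]] x y), (fun x y => ![![(0:Fin 2),0],![1,1]] x y)),
   ((fun x y => ![![(0:Fin 2),0],![0,1]] x y), (fun x y => ![![(0:Fin 2),1],![1,1]] x y)),
   ((fun x y => ![![(0:Fin 2),0],![0,1]] x y), (fun x y => ![![(1:Fin 2),1],![1,1]] x y)),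
   ((fun x y => ![![(0:Fin 2),1],![1,0]] x y), (fun x y => ![![(0:Fin 2),0],![0,0]] x y)),
   ((fun x y => ![![(0:Fin 2),1],![1,0]] x y), (fun x y => ![![(0:Fin 2),0],![0,1]] x y))}, ?_, ?_, ?_, ?_⟩
  · decide
  · decide
  · decide
  · decide
end

section
/- Up to isomorphism, there are exactly 6 additively idempotent semirings (ai-semirings) with 2 elements, where an ai-semiring is a semiring satisfying x + x = x for all x. -/
def aMax : Fin 2 → Fin 2 → Fin 2 := ![![0,0],![0,1]]
def m1 : Fin 2 → Fin 2 → Fin 2 := ![![0,0],![0,0]]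
def m2 : Fin 2 → Fin 2 → Fin 2 := ![![0,0],![0,1]]
def m3 : Fin 2 → Fin 2 → Fin 2 := ![![0,0],![1,1]]
def m4 : Fin 2 → Fin 2 → Fin 2 := ![![0,1],![0,1]]
def m5 : Fin 2 → Fin 2 → Fin 2 := ![![0,1],![1,1]]
def m6 : Fin 2 → Fin 2 → Fin 2 := ![![1,1],![1,1]]

/-- There are exactly 6 additively idempotent semirings (`x + x = x`) with 2
elements up to isomorphism. -/
theorem card_ai_semirings_two : ∃ reps :
    Finset ((Fin 2 → Fin 2 → Fin 2) × (Fin 2 → Fin 2 → Fin 2)),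
    reps.card = 6 ∧
    (∀ p ∈ reps, IsSemiringOps p.1 p.2 ∧ ∀ x, p.1 x x = x) ∧
    (∀ p ∈ reps, ∀ q ∈ reps, p ≠ q → ¬ SemiringIso p.1 p.2 q.1 q.2) ∧
    (∀ add mul : Fin 2 → Fin 2 → Fin 2, IsSemiringOps add mul →
      (∀ x, add x x = x) → ∃ p ∈ reps, SemiringIso add mul p.1 p.2) := by
  refine ⟨{(aMax,m1),(aMax,m2),(aMax,m3),(aMax,m4),(aMax,m5),(aMax,m6)}, ?_, ?_, ?_, ?_⟩ <;> (try simp only [IsSemiringOps, SemiringIso]) <;> decide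
end
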